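/- Let q ≥ 1 and Δ ≥ 3 be integers and let B be a symmetric q×q real matrix with nonnegative entries. Suppose R, C ∈ ℝ^q have all entries positive and there exist constants λ, μ > 0 such that R_i = λ·(∑_j B_{ij}C_j)^{Δ−1} for every i and C_j = μ·(∑_i B_{ij}R_i)^{Δ−1} for every j, and suppose ∑_{i,j} B_{ij}·R_i·C_j = 1. Define α_i = R_i·∑_j B_{ij}C_j, β_j = C_j·∑_i B_{ij}R_i, and x_{ij} = B_{ij}·R_i·C_j. Then (α,β,x) is feasible for the first moment and Υ₁(α,β,x) = −(Δ−1)·( ln(∑_i R_i^{Δ/(Δ−1)}) + ln(∑_j C_j^{Δ/(Δ−1)}) ). -/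

import Mathlib

open Matrix

/-- a normalized positive fixpoint of the tree recursions yields a
feasible triple (α,β,x) for the first moment, with
Υ₁(α,β,x) = −(Δ−1)(ln ∑ R_i^{Δ/(Δ−1)} + ln ∑ C_j^{Δ/(Δ−1)}). -/
theorem tree_fixpoint_first_moment_value
    (q Δ : ℕ) (hq : 1 ≤ q) (hΔ : 3 ≤ Δ)
    (B : Matrix (Fin q) (Fin q) ℝ) (hBsymm : B.IsSymm)
    (hBnonneg : ∀ i j, 0 ≤ B i j)
    (R C : Fin q → ℝ) (hR : ∀ i, 0 < R i) (hC : ∀ j, 0 < C j)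
    (lam mu : ℝ) (hlam : 0 < lam) (hmu : 0 < mu)
    (hfixR : ∀ i, R i = lam * (∑ j, B i j * C j) ^ (Δ - 1))
    (hfixC : ∀ j, C j = mu * (∑ i, B i j * R i) ^ (Δ - 1))
    (hnorm : (∑ i, ∑ j, B i j * R i * C j) = 1) :
    ((∀ i, 0 ≤ R i * ∑ j, B i j * C j) ∧
     (∀ j, 0 ≤ C j * ∑ i, B i j * R i) ∧
     (∑ i, R i * ∑ j, B i j * C j) = 1 ∧
     (∑ j, C j * ∑ i, B i j * R i) = 1 ∧
     (∀ i j, 0 ≤ B i j * R i * C j) ∧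
     (∀ i j, B i j = 0 → B i j * R i * C j = 0) ∧
     (∀ i, (∑ j, B i j * R i * C j) = R i * ∑ j, B i j * C j) ∧
     (∀ j, (∑ i, B i j * R i * C j) = C j * ∑ i, B i j * R i)) ∧
    ((Δ : ℝ) - 1) *
        ((∑ i, (R i * ∑ j, B i j * C j) * Real.log (R i * ∑ j, B i j * C j))
          + ∑ j, (C j * ∑ i, B i j * R i) * Real.log (C j * ∑ i, B i j * R i))
      + (Δ : ℝ) *
        ((∑ i, ∑ j, (B i j * R i * C j) * Real.log (B i j))
          - ∑ i, ∑ j, (B i j * R i * C j) * Real.log (B i j * R i * C j))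
      = -((Δ : ℝ) - 1) *
          (Real.log (∑ i, R i ^ ((Δ : ℝ) / ((Δ : ℝ) - 1)))
            + Real.log (∑ j, C j ^ ((Δ : ℝ) / ((Δ : ℝ) - 1)))) := by
  have h1Δ : 1 ≤ Δ := by omega
  have hdcast : ((Δ - 1 : ℕ) : ℝ) = (Δ : ℝ) - 1 := by
    push_cast [Nat.cast_sub h1Δ]; ring
  have hdpos : (0:ℝ) < (Δ : ℝ) - 1 := by
    have : (3:ℝ) ≤ (Δ:ℝ) := by exact_mod_cast hΔ
    linarith
  have hS : ∀ i, 0 < ∑ j, B i j * C j := by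
    intro i
    have hnn : 0 ≤ ∑ j, B i j * C j :=
      Finset.sum_nonneg fun j _ => mul_nonneg (hBnonneg i j) (hC j).le
    rcases hnn.lt_or_eq with h | h
    · exact h
    · exfalso
      have h2 := hfixR i
      rw [← h, zero_pow (by omega : Δ - 1 ≠ 0), mul_zero] at h2
      exact (hR i).ne' h2
  have hT : ∀ j, 0 < ∑ i, B i j * R i := by
    intro j
    have hnn : 0 ≤ ∑ i, B i j * R i :=
      Finset.sum_nonneg fun i _ => mul_nonneg (hBnonneg i j) (hR i).le
    rcases hnn.lt_or_eq with h | h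
    · exact h
    · exfalso
      have h2 := hfixC j
      rw [← h, zero_pow (by omega : Δ - 1 ≠ 0), mul_zero] at h2
      exact (hC j).ne' h2
  have hrowx : ∀ i, (∑ j, B i j * R i * C j) = R i * ∑ j, B i j * C j := by
    intro i; rw [Finset.mul_sum]; exact Finset.sum_congr rfl fun j _ => by ring
  have hcolx : ∀ j, (∑ i, B i j * R i * C j) = C j * ∑ i, B i j * R i := by
    intro j; rw [Finset.mul_sum]; exact Finset.sum_congr rfl fun i _ => by ring
  have halpha : (∑ i, R i * ∑ j, B i j * C j) = 1 := by
    rw [← hnorm]; exact Finset.sum_congr rfl fun i _ => (hrowx i).symm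
  have hbeta : (∑ j, C j * ∑ i, B i j * R i) = 1 := by
    have h2 : (∑ j, ∑ i, B i j * R i * C j) = 1 := by
      rw [Finset.sum_comm]; exact hnorm
    rw [← h2]; exact Finset.sum_congr rfl fun j _ => (hcolx j).symm
  refine ⟨⟨fun i => mul_nonneg (hR i).le (hS i).le,
          fun j => mul_nonneg (hC j).le (hT j).le,
          halpha, hbeta,
          fun i j => mul_nonneg (mul_nonneg (hBnonneg i j) (hR i).le) (hC j).le,
          fun i j h => by rw [h]; ring,
          hrowx, hcolx⟩, ?_⟩
  -- now the value identity
  have hlogR : ∀ i, Real.log (R i)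
      = Real.log lam + ((Δ:ℝ) - 1) * Real.log (∑ j, B i j * C j) := by
    intro i
    rw [hfixR i, Real.log_mul hlam.ne' (pow_ne_zero _ (hS i).ne'), Real.log_pow, hdcast]
  have hlogC : ∀ j, Real.log (C j)
      = Real.log mu + ((Δ:ℝ) - 1) * Real.log (∑ i, B i j * R i) := by
    intro j
    rw [hfixC j, Real.log_mul hmu.ne' (pow_ne_zero _ (hT j).ne'), Real.log_pow, hdcast]
  have lem1 : ((Δ:ℝ) - 1) * (∑ i, (R i * ∑ j, B i j * C j) * Real.log (R i * ∑ j, B i j * C j))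
      = (Δ:ℝ) * (∑ i, (R i * ∑ j, B i j * C j) * Real.log (R i)) - Real.log lam := by
    rw [Finset.mul_sum]
    have hpt : ∀ i ∈ Finset.univ, ((Δ:ℝ) - 1) * ((R i * ∑ j, B i j * C j) * Real.log (R i * ∑ j, B i j * C j))
        = (Δ:ℝ) * ((R i * ∑ j, B i j * C j) * Real.log (R i)) - Real.log lam * (R i * ∑ j, B i j * C j) := by
      intro i _
      rw [Real.log_mul (hR i).ne' (hS i).ne']
      rw [hlogR i]; ring
    rw [Finset.sum_congr rfl hpt, Finset.sum_sub_distrib, ← Finset.mul_sum, ← Finset.mul_sum,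
      halpha, mul_one]
  have lem2 : ((Δ:ℝ) - 1) * (∑ j, (C j * ∑ i, B i j * R i) * Real.log (C j * ∑ i, B i j * R i))
      = (Δ:ℝ) * (∑ j, (C j * ∑ i, B i j * R i) * Real.log (C j)) - Real.log mu := by
    rw [Finset.mul_sum]
    have hpt : ∀ j ∈ Finset.univ, ((Δ:ℝ) - 1) * ((C j * ∑ i, B i j * R i) * Real.log (C j * ∑ i, B i j * R i))
        = (Δ:ℝ) * ((C j * ∑ i, B i j * R i) * Real.log (C j)) - Real.log mu * (C j * ∑ i, B i j * R i) := by
      intro j _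
      rw [Real.log_mul (hC j).ne' (hT j).ne']
      rw [hlogC j]; ring
    rw [Finset.sum_congr rfl hpt, Finset.sum_sub_distrib, ← Finset.mul_sum, ← Finset.mul_sum,
      hbeta, mul_one]
  have lem3 : (∑ i, ∑ j, (B i j * R i * C j) * Real.log (B i j))
      - (∑ i, ∑ j, (B i j * R i * C j) * Real.log (B i j * R i * C j))
      = -(∑ i, (R i * ∑ j, B i j * C j) * Real.log (R i))
        - (∑ j, (C j * ∑ i, B i j * R i) * Real.log (C j)) := by
    have hpt : ∀ i j, (B i j * R i * C j) * Real.log (B i j)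
        - (B i j * R i * C j) * Real.log (B i j * R i * C j)
        = -((B i j * R i * C j) * Real.log (R i)) - (B i j * R i * C j) * Real.log (C j) := by
      intro i j
      rcases eq_or_lt_of_le (hBnonneg i j) with h | h
      · simp [← h]
      · rw [Real.log_mul (mul_ne_zero h.ne' (hR i).ne') (hC j).ne',
          Real.log_mul h.ne' (hR i).ne']
        ring
    have e1 : (∑ i, ∑ j, (B i j * R i * C j) * Real.log (B i j))
        - (∑ i, ∑ j, (B i j * R i * C j) * Real.log (B i j * R i * C j))
        = ∑ i, ∑ j, ((B i j * R i * C j) * Real.log (B i j)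
            - (B i j * R i * C j) * Real.log (B i j * R i * C j)) := by
      rw [← Finset.sum_sub_distrib]
      exact Finset.sum_congr rfl fun i _ => (Finset.sum_sub_distrib _ _).symm
    have e2 : ∀ i ∈ Finset.univ, (∑ j, ((B i j * R i * C j) * Real.log (B i j)
            - (B i j * R i * C j) * Real.log (B i j * R i * C j)))
        = ∑ j, (-((B i j * R i * C j) * Real.log (R i)) - (B i j * R i * C j) * Real.log (C j)) :=
      fun i _ => Finset.sum_congr rfl fun j _ => hpt i j
    have e3 : (∑ i, ∑ j, (-((B i j * R i * C j) * Real.log (R i)) - (B i j * R i * C j) * Real.log (C j)))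
        = -(∑ i, ∑ j, (B i j * R i * C j) * Real.log (R i))
          - (∑ i, ∑ j, (B i j * R i * C j) * Real.log (C j)) := by
      rw [← Finset.sum_neg_distrib, ← Finset.sum_sub_distrib]
      refine Finset.sum_congr rfl fun i _ => ?_
      rw [← Finset.sum_neg_distrib, ← Finset.sum_sub_distrib]
    have e4 : (∑ i, ∑ j, (B i j * R i * C j) * Real.log (R i))
        = ∑ i, (R i * ∑ j, B i j * C j) * Real.log (R i) := by
      refine Finset.sum_congr rfl fun i _ => ?_
      rw [← Finset.sum_mul, hrowx i]
    have e5 : (∑ i, ∑ j, (B i j * R i * C j) * Real.log (C j))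
        = ∑ j, (C j * ∑ i, B i j * R i) * Real.log (C j) := by
      rw [Finset.sum_comm]
      refine Finset.sum_congr rfl fun j _ => ?_
      rw [← Finset.sum_mul, hcolx j]
    rw [e1, Finset.sum_congr rfl e2, e3, e4, e5]
  have hRsum : (∑ i, R i ^ ((Δ : ℝ) / ((Δ : ℝ) - 1))) = lam ^ ((1:ℝ) / ((Δ:ℝ) - 1)) := by
    have hpt : ∀ i ∈ Finset.univ, R i ^ ((Δ : ℝ) / ((Δ : ℝ) - 1))
        = lam ^ ((1:ℝ) / ((Δ:ℝ) - 1)) * (R i * ∑ j, B i j * C j) := by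
      intro i _
      have he : (Δ : ℝ) / ((Δ : ℝ) - 1) = 1 + 1 / ((Δ:ℝ) - 1) := by
        field_simp
        ring
      rw [he, Real.rpow_add (hR i), Real.rpow_one]
      have h2 : R i ^ ((1:ℝ) / ((Δ:ℝ) - 1)) = lam ^ ((1:ℝ) / ((Δ:ℝ) - 1)) * (∑ j, B i j * C j) := by
        conv_lhs => rw [hfixR i]
        rw [Real.mul_rpow hlam.le (pow_nonneg (hS i).le _),
          ← Real.rpow_natCast (∑ j, B i j * C j) (Δ - 1),
          ← Real.rpow_mul (hS i).le, hdcast, mul_one_div, div_self hdpos.ne', Real.rpow_one]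
      rw [h2]; ring
    rw [Finset.sum_congr rfl hpt, ← Finset.mul_sum, halpha, mul_one]
  have hCsum : (∑ j, C j ^ ((Δ : ℝ) / ((Δ : ℝ) - 1))) = mu ^ ((1:ℝ) / ((Δ:ℝ) - 1)) := by
    have hpt : ∀ j ∈ Finset.univ, C j ^ ((Δ : ℝ) / ((Δ : ℝ) - 1))
        = mu ^ ((1:ℝ) / ((Δ:ℝ) - 1)) * (C j * ∑ i, B i j * R i) := by
      intro j _
      have he : (Δ : ℝ) / ((Δ : ℝ) - 1) = 1 + 1 / ((Δ:ℝ) - 1) := by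
        field_simp
        ring
      rw [he, Real.rpow_add (hC j), Real.rpow_one]
      have h2 : C j ^ ((1:ℝ) / ((Δ:ℝ) - 1)) = mu ^ ((1:ℝ) / ((Δ:ℝ) - 1)) * (∑ i, B i j * R i) := by
        conv_lhs => rw [hfixC j]
        rw [Real.mul_rpow hmu.le (pow_nonneg (hT j).le _),
          ← Real.rpow_natCast (∑ i, B i j * R i) (Δ - 1),
          ← Real.rpow_mul (hT j).le, hdcast, mul_one_div, div_self hdpos.ne', Real.rpow_one]
      rw [h2]; ring
    rw [Finset.sum_congr rfl hpt, ← Finset.mul_sum, hbeta, mul_one]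
  have hlogRsum : ((Δ:ℝ) - 1) * Real.log (∑ i, R i ^ ((Δ : ℝ) / ((Δ : ℝ) - 1)))
      = Real.log lam := by
    rw [hRsum, Real.log_rpow hlam, ← mul_assoc, mul_one_div, div_self hdpos.ne', one_mul]
  have hlogCsum : ((Δ:ℝ) - 1) * Real.log (∑ j, C j ^ ((Δ : ℝ) / ((Δ : ℝ) - 1)))
      = Real.log mu := by
    rw [hCsum, Real.log_rpow hmu, ← mul_assoc, mul_one_div, div_self hdpos.ne', one_mul]
  linear_combination lem1 + lem2 + (Δ:ℝ) * lem3 + hlogRsum + hlogCsum
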